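/- Let n, d be positive integers and let h ∈ ℝ[X₁,…,Xₙ] be a polynomial of degree at most 2d with h(x) ≥ 0 for all x ∈ ℝⁿ and whose homogeneous part of degree 2d equals X₁^{2d} + ⋯ + Xₙ^{2d}. Then the real zero set Z(h) = {x ∈ ℝⁿ : h(x) = 0} has at most (2d−1)ⁿ elements. -/

import Mathlib

open MvPolynomial Finsupp

noncomputable section

/-- The one-variable restriction of a multivariate polynomial along coordinate `i`. -/
def restrictPoly {n : ℕ} (x : Fin n → ℝ) (i : Fin n) (p : MvPolynomial (Fin n) ℝ) :
    Polynomial ℝ :=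
  MvPolynomial.aeval (fun j => if j = i then Polynomial.X else Polynomial.C (x j)) p

lemma restrictPoly_eval {n : ℕ} (x : Fin n → ℝ) (i : Fin n) (p : MvPolynomial (Fin n) ℝ)
    (t : ℝ) : (restrictPoly x i p).eval t = eval (Function.update x i t) p := by
  induction p using MvPolynomial.induction_on with
  | C a => simp [restrictPoly]
  | add p q hp hq => simp [restrictPoly, map_add, hp, hq] at *
  | mul_X p j hp =>
      simp only [restrictPoly, map_mul, aeval_X, Polynomial.eval_mul, eval_mul, eval_X] at *
      rw [hp, Function.update_apply]
      by_cases hj : j = i <;> simp [hj]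

lemma restrictPoly_deriv {n : ℕ} (x : Fin n → ℝ) (i : Fin n) (p : MvPolynomial (Fin n) ℝ) :
    (Polynomial.derivative (restrictPoly x i p)).eval (x i) = eval x (pderiv i p) := by
  induction p using MvPolynomial.induction_on with
  | C a => simp [restrictPoly, pderiv_C]
  | add p q hp hq => simp [restrictPoly, map_add, hp, hq] at *
  | mul_X p j hp =>
      have hev : (restrictPoly x i p).eval (x i) = eval x p := by
        rw [restrictPoly_eval, Function.update_eq_self]
      simp only [restrictPoly, map_mul, aeval_X] at *
      rw [Polynomial.derivative_mul, Polynomial.eval_add, Polynomial.eval_mul,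
        Polynomial.eval_mul, hp, hev, pderiv_mul, eval_add, eval_mul, eval_mul]
      by_cases hj : j = i
      · subst hj; simp
      · simp [hj, pderiv_X_of_ne hj]

/-- at a zero of a nonnegative polynomial all partial derivatives vanish -/
lemma pderiv_vanish {n : ℕ} (h : MvPolynomial (Fin n) ℝ)
    (hnn : ∀ x : Fin n → ℝ, 0 ≤ eval x h) (x : Fin n → ℝ) (hx : eval x h = 0) (i : Fin n) :
    eval x (pderiv i h) = 0 := by
  have hmin : IsLocalMin (fun t => (restrictPoly x i h).eval t) (x i) := by
    apply Filter.Eventually.of_forall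
    intro t
    simp only []
    rw [restrictPoly_eval, restrictPoly_eval, Function.update_eq_self, hx]
    exact hnn _
  have := hmin.deriv_eq_zero
  rw [Polynomial.deriv] at this
  rw [← restrictPoly_deriv x i h, this]

/-- degree drop for pderiv -/
lemma pderiv_totalDegree_le {n : ℕ} (p : MvPolynomial (Fin n) ℝ) (i : Fin n) {k : ℕ}
    (hp : p.totalDegree ≤ k) : (pderiv i p).totalDegree ≤ k - 1 := by
  conv_lhs => rw [p.as_sum]
  rw [map_sum]
  refine le_trans (totalDegree_finset_sum _ _) (Finset.sup_le fun m hm => ?_)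
  rw [pderiv_monomial]
  by_cases hmi : m i = 0
  · simp [hmi]
  · refine le_trans (totalDegree_monomial_le _ _) ?_
    simp only [Function.id_def]
    have hsum : (m - single i 1).sum (fun _ e => e) + 1 = m.sum (fun _ e => e) := by
      have hrepr : (m - single i 1) + single i 1 = m := by
        ext j
        rcases eq_or_ne j i with rfl | hj
        · simp [Finsupp.sub_apply]; omega
        · simp [Finsupp.sub_apply, Finsupp.single_apply, (Ne.symm hj)]
      conv_rhs => rw [← hrepr]
      rw [Finsupp.sum_add_index' (fun _ => rfl) (fun _ a b => rfl)]
      simp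
    have hms : m.sum (fun _ e => e) ≤ k := le_trans (le_totalDegree hm) hp
    omega

lemma td_le_of_homComponent_zero {n : ℕ} {p : MvPolynomial (Fin n) ℝ} {D : ℕ}
    (h1 : p.totalDegree ≤ D) (h2 : homogeneousComponent D p = 0) :
    p.totalDegree ≤ D - 1 := by
  refine Finset.sup_le fun m hm => ?_
  have hle : m.sum (fun _ e => e) ≤ D := le_trans (le_totalDegree hm) h1
  rcases lt_or_eq_of_le hle with hlt | heq
  · omega
  · exfalso
    have := coeff_homogeneousComponent (φ := p) D m
    rw [h2] at this
    simp only [coeff_zero] at this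
    rw [if_pos] at this
    · exact (MvPolynomial.mem_support_iff.mp hm) this.symm
    · exact heq

lemma card_bound (n d : ℕ) (hn : 0 < n) (hd : 0 < d) (h : MvPolynomial (Fin n) ℝ)
    (hdeg : h.totalDegree ≤ 2 * d)
    (hnn : ∀ x : Fin n → ℝ, 0 ≤ eval x h)
    (hlead : MvPolynomial.homogeneousComponent (2 * d) h = ∑ i : Fin n, X i ^ (2 * d))
    (S : Finset (Fin n → ℝ)) (hS : ∀ x ∈ S, eval x h = 0) :
    S.card ≤ (2 * d - 1) ^ n := by
  classical
  set e : ℕ := 2 * d - 1 with he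
  have he1 : 1 ≤ e := by omega
  -- the lower-order remainder
  set r : MvPolynomial (Fin n) ℝ := h - ∑ j : Fin n, X j ^ (2 * d) with hr
  have hrtd : r.totalDegree ≤ 2 * d - 1 := by
    apply td_le_of_homComponent_zero (D := 2 * d)
    · rw [hr, sub_eq_add_neg]
      refine le_trans (totalDegree_add _ _) (max_le hdeg ?_)
      rw [totalDegree_neg]
      refine le_trans (totalDegree_finset_sum _ _) (Finset.sup_le fun j _ => ?_)
      simp
    · have hhom : homogeneousComponent (2 * d) (∑ j : Fin n, X j ^ (2 * d) :
          MvPolynomial (Fin n) ℝ) = ∑ j : Fin n, X j ^ (2 * d) := by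
        rw [map_sum]
        refine Finset.sum_congr rfl fun j _ => ?_
        rw [homogeneousComponent_of_mem (by
          rw [mem_homogeneousSubmodule]
          simpa only [one_mul] using (isHomogeneous_X ℝ j).pow (2 * d))]
        simp
      rw [hr, map_sub, hlead, hhom, sub_self]
  have hti : ∀ i : Fin n, (pderiv i r).totalDegree ≤ 2 * d - 2 := by
    intro i
    have := pderiv_totalDegree_le r i hrtd
    omega
  -- the derivative decomposition
  have hg : ∀ i : Fin n, pderiv i h
      = monomial (single i e) ((2 * d : ℕ) : ℝ) + pderiv i r := by
    intro i
    have hdecomp : h = (∑ j : Fin n, X j ^ (2 * d)) + r := by rw [hr]; ring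
    rw [hdecomp, map_add, map_sum]
    congr 1
    rw [Finset.sum_eq_single i]
    · rw [X_pow_eq_monomial, pderiv_monomial]
      have h1 : single i (2 * d) - single i 1 = single i e := by
        rw [← Finsupp.single_tsub]
      rw [h1]
      simp
    · intro j _ hj
      rw [X_pow_eq_monomial, pderiv_monomial]
      rw [Finsupp.single_apply, if_neg hj]
      simp
    · simp
  -- key evaluation identity at the zeros
  have hXe : ∀ x ∈ S, ∀ i : Fin n, (x i) ^ e = -(2 * d : ℝ)⁻¹ * eval x (pderiv i r) := by
    intro x hx i
    have hv := pderiv_vanish h hnn x (hS x hx) i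
    rw [hg i, map_add, eval_monomial] at hv
    have hprod : (single i e).prod (fun j k => x j ^ k) = x i ^ e := by
      rw [Finsupp.prod_single_index]; simp
    rw [hprod] at hv
    have h2d : (2 * d : ℝ) ≠ 0 := by positivity
    push_cast at hv ⊢
    field_simp
    nlinarith [hv]
  -- the span of evaluations of low monomials on S
  let K := {y // y ∈ S}
  let f : (Fin n → Fin e) → (K → ℝ) := fun v s =>
    eval (s : Fin n → ℝ) (monomial (Finsupp.equivFunOnFinite.symm (fun i => (v i : ℕ))) 1)
  let Rng : Submodule ℝ (K → ℝ) := Submodule.span ℝ (Set.range f)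
  have claim : ∀ D : ℕ, ∀ p : MvPolynomial (Fin n) ℝ, p.totalDegree ≤ D →
      (fun s : K => eval (s : Fin n → ℝ) p) ∈ Rng := by
    intro D
    induction D using Nat.strong_induction_on with
    | _ D IH =>
      intro p hp
      have hrepr : (fun s : K => eval (s : Fin n → ℝ) p)
          = ∑ m ∈ p.support, fun s : K => eval (s : Fin n → ℝ) (monomial m (coeff m p)) := by
        funext s
        rw [Finset.sum_apply]
        conv_lhs => rw [p.as_sum]
        rw [map_sum]
      rw [hrepr]
      refine Submodule.sum_mem _ fun m hm => ?_
      have hmD : m.sum (fun _ k => k) ≤ D := le_trans (le_totalDegree hm) hp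
      by_cases hcase : ∀ i, m i < e
      · have hfv : (fun s : K => eval (s : Fin n → ℝ) (monomial m (coeff m p)))
            = (coeff m p) • f (fun i => ⟨m i, hcase i⟩) := by
          funext s
          simp only [f, Pi.smul_apply, smul_eq_mul]
          have hmm : Finsupp.equivFunOnFinite.symm
              (fun i => ((⟨m i, hcase i⟩ : Fin e) : ℕ)) = m :=
            Finsupp.equivFunOnFinite_symm_coe m
          rw [hmm, eval_monomial, eval_monomial, one_mul]
        rw [hfv]
        exact Submodule.smul_mem _ _ (Submodule.subset_span ⟨_, rfl⟩)
      · push_neg at hcase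
        obtain ⟨i, hei⟩ := hcase
        set m' := m - single i e with hm'
        have hadd : m' + single i e = m := by
          ext j
          rcases eq_or_ne j i with rfl | hj
          · simp only [Finsupp.add_apply, hm', Finsupp.tsub_apply, Finsupp.single_eq_same]
            omega
          · simp [hm', Finsupp.tsub_apply, Finsupp.single_apply, Ne.symm hj]
        have hsum : m'.sum (fun _ k => k) + e = m.sum (fun _ k => k) := by
          conv_rhs => rw [← hadd]
          rw [Finsupp.sum_add_index' (fun _ => rfl) (fun _ a b => rfl)]
          simp
        set q := monomial m' (coeff m p * (-(2 * d : ℝ)⁻¹)) * pderiv i r with hq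
        have heval : (fun s : K => eval (s : Fin n → ℝ) (monomial m (coeff m p)))
            = fun s : K => eval (s : Fin n → ℝ) q := by
          funext s
          have hmono : monomial m (coeff m p) = monomial m' (coeff m p) * (X i ^ e) := by
            rw [X_pow_eq_monomial, monomial_mul, mul_one, hadd]
          have hx := hXe (s : Fin n → ℝ) s.2 i
          rw [hmono, hq, eval_mul, eval_mul, eval_monomial, eval_monomial, eval_pow, eval_X, hx]
          ring
        rw [heval]
        have hqtd : q.totalDegree ≤ D - 1 := by
          refine le_trans (totalDegree_mul _ _) ?_
          have h1 := totalDegree_monomial_le m' (coeff m p * (-(2 * d : ℝ)⁻¹))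
          have h2 := hti i
          simp only [Function.id_def] at h1
          omega
        exact IH (D - 1) (by omega) q hqtd
  -- interpolation: indicator functions are evaluations of polynomials
  have interp : ∀ s : K, ∃ p : MvPolynomial (Fin n) ℝ,
      ∀ t : K, eval (t : Fin n → ℝ) p = if t = s then 1 else 0 := by
    intro s
    have hchoice : ∀ y : Fin n → ℝ, y ≠ (s : Fin n → ℝ) → ∃ i, (s : Fin n → ℝ) i ≠ y i := by
      intro y hy
      by_contra hcon
      push_neg at hcon
      exact hy (funext fun i => (hcon i).symm)
    set c : (Fin n → ℝ) → Fin n := fun y =>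
      if hy : ∃ i, (s : Fin n → ℝ) i ≠ y i then hy.choose else ⟨0, hn⟩ with hc
    set q : MvPolynomial (Fin n) ℝ :=
      ∏ y ∈ S.erase (s : Fin n → ℝ), (X (c y) - C (y (c y))) with hqdef
    have hq0 : ∀ t ∈ S.erase (s : Fin n → ℝ), eval t q = 0 := by
      intro t ht
      rw [hqdef, map_prod]
      refine Finset.prod_eq_zero ht ?_
      simp
    have hqs : eval (s : Fin n → ℝ) q ≠ 0 := by
      rw [hqdef, map_prod, Finset.prod_ne_zero_iff]
      intro y hy
      have hyne : y ≠ (s : Fin n → ℝ) := Finset.ne_of_mem_erase hy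
      have hex : ∃ i, (s : Fin n → ℝ) i ≠ y i := hchoice y hyne
      have hcy : c y = hex.choose := by rw [hc]; exact dif_pos hex
      simp only [map_sub, eval_X, eval_C]
      rw [hcy]
      exact sub_ne_zero_of_ne hex.choose_spec
    refine ⟨C (eval (s : Fin n → ℝ) q)⁻¹ * q, fun t => ?_⟩
    rcases eq_or_ne t s with rfl | hts
    · simp [eval_mul, inv_mul_cancel₀ hqs]
    · have htmem : (t : Fin n → ℝ) ∈ S.erase (s : Fin n → ℝ) := by
        rw [Finset.mem_erase]
        exact ⟨fun hcon => hts (Subtype.ext hcon), t.2⟩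
      simp [eval_mul, hq0 _ htmem, if_neg hts]
  choose ps hps using interp
  have htop : ∀ w : K → ℝ, w ∈ Rng := by
    intro w
    have hw : w = ∑ s : K, w s • (fun t : K => eval (t : Fin n → ℝ) (ps s)) := by
      funext t
      rw [Finset.sum_apply]
      simp only [Pi.smul_apply, smul_eq_mul, hps, mul_ite, mul_one, mul_zero]
      convert (Fintype.sum_ite_eq t w).symm
    rw [hw]
    exact Submodule.sum_mem _ fun s _ => Submodule.smul_mem _ _ (claim _ (ps s) le_rfl)
  have hrngtop : Rng = ⊤ := by
    rw [Submodule.eq_top_iff']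
    exact htop
  have hfr1 : Module.finrank ℝ (K → ℝ) = S.card := by
    rw [Module.finrank_fintype_fun_eq_card, Fintype.card_coe]
  have hfr2 : Module.finrank ℝ (K → ℝ) ≤ e ^ n := by
    have heq : Module.finrank ℝ (K → ℝ) = Module.finrank ℝ Rng := by
      rw [hrngtop, finrank_top]
    rw [heq]
    refine le_trans (finrank_span_le_card _) ?_
    rw [Set.toFinset_range]
    refine le_trans Finset.card_image_le ?_
    simp [Finset.card_univ]
  omega

/-- Proposition `norm2dbound`: a globally nonnegative polynomial of degree at most `2d` whose
degree-`2d` homogeneous part is `X₁^{2d} + ⋯ + Xₙ^{2d}` has at most `(2d-1)ⁿ` real zeros. -/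
theorem stmt_6 (n d : ℕ) (hn : 0 < n) (hd : 0 < d) (h : MvPolynomial (Fin n) ℝ)
    (hdeg : h.totalDegree ≤ 2 * d)
    (hnn : ∀ x : Fin n → ℝ, 0 ≤ eval x h)
    (hlead : MvPolynomial.homogeneousComponent (2 * d) h = ∑ i : Fin n, X i ^ (2 * d)) :
    {x : Fin n → ℝ | eval x h = 0}.Finite ∧
    {x : Fin n → ℝ | eval x h = 0}.ncard ≤ (2 * d - 1) ^ n := by
  have key : ∀ S : Finset (Fin n → ℝ), (∀ x ∈ S, eval x h = 0) →
      S.card ≤ (2 * d - 1) ^ n := card_bound n d hn hd h hdeg hnn hlead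
  have hfin : {x : Fin n → ℝ | eval x h = 0}.Finite := by
    by_contra hinf
    have hinf' : {x : Fin n → ℝ | eval x h = 0}.Infinite := hinf
    obtain ⟨T, hTsub, hTcard⟩ := hinf'.exists_subset_card_eq ((2 * d - 1) ^ n + 1)
    have := key T (fun x hx => hTsub hx)
    omega
  refine ⟨hfin, ?_⟩
  rw [Set.ncard_eq_toFinset_card _ hfin]
  exact key _ (fun x hx => (Set.Finite.mem_toFinset hfin).mp hx)

end
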